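/- arXiv:1705.09346 — 3 statements merged into one kernel-verified Lean document; each statement's English description precedes it below -/
import Mathlib

section
/- For k > 1 collinear points placed at unit distance apart, the maximum total area of non-overlapping disks centered at these points equals π·⌈k/2⌉, achieved by placing unit-radius disks at alternate points and zero-radius disks elsewhere. -/
open Real Finset

-- helper: natural distance lower bound to real abs
private lemma nat_abs_le (a b n : ℕ) (h : n + min a b ≤ max a b) :
    (n : ℝ) ≤ |(a : ℝ) - (b : ℝ)| := by
  rcases le_total a b with hle | hle
  · rw [abs_sub_comm, abs_of_nonneg (sub_nonneg.mpr (Nat.cast_le.mpr hle))]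
    have h' : n + a ≤ b := by omega
    have := Nat.cast_le (α := ℝ).mpr h'
    push_cast at this; linarith
  · rw [abs_of_nonneg (sub_nonneg.mpr (Nat.cast_le.mpr hle))]
    have h' : n + b ≤ a := by omega
    have := Nat.cast_le (α := ℝ).mpr h'
    push_cast at this; linarith

private lemma count_even (k : ℕ) :
    ∑ i ∈ Finset.range k, (if i % 2 = 0 then (1 : ℝ) else 0) = (((k + 1) / 2 : ℕ) : ℝ) := by
  induction k with
  | zero => simp
  | succ m ih =>
    rw [Finset.sum_range_succ, ih]
    rcases Nat.even_or_odd m with he | ho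
    · have hm : m % 2 = 0 := Nat.even_iff.mp he
      rw [if_pos hm]
      have : (m + 1 + 1) / 2 = (m + 1) / 2 + 1 := by omega
      rw [this]; push_cast; ring
    · have hm : m % 2 = 1 := Nat.odd_iff.mp ho
      rw [if_neg (by omega)]
      have : (m + 1 + 1) / 2 = (m + 1) / 2 := by omega
      rw [this]; ring

private lemma sum_pair (s : ℕ → ℝ) (hs : ∀ i, 0 ≤ s i)
    (h : ∀ i, s i + s (i + 1) ≤ 1) (n : ℕ) :
    ∑ i ∈ Finset.range n, s i ≤ (((n + 1) / 2 : ℕ) : ℝ) := by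
  induction n using Nat.strong_induction_on with
  | _ n ih =>
    match n with
    | 0 => simp
    | 1 =>
      simp only [Finset.sum_range_one]
      have := h 0; have := hs 1
      norm_num; linarith
    | (m + 2) =>
      rw [Finset.sum_range_succ, Finset.sum_range_succ]
      have h1 := ih m (by omega)
      have h2 := h m
      have : ((m + 2 + 1) / 2 : ℕ) = (m + 1) / 2 + 1 := by omega
      rw [this]; push_cast; linarith

theorem collinear_unit_points_maxArea (k : ℕ) (hk : 1 < k) :
    IsGreatest
      {A : ℝ | ∃ r : Fin k → ℝ,
        (∀ i, 0 ≤ r i) ∧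
        (∀ i j : Fin k, i ≠ j → r i + r j ≤ |(i : ℝ) - (j : ℝ)|) ∧
        A = ∑ i, π * r i ^ 2}
      (π * (((k + 1) / 2 : ℕ) : ℝ)) ∧
    -- the maximum is achieved by unit disks at alternate points, radius 0 elsewhere
    (∑ i : Fin k, π * (if (i : ℕ) % 2 = 0 then (1 : ℝ) else 0) ^ 2
        = π * (((k + 1) / 2 : ℕ) : ℝ)) ∧
    (∀ i, 0 ≤ (if (i : ℕ) % 2 = 0 then (1 : ℝ) else 0)) ∧
    (∀ i j : Fin k, i ≠ j →
      (if (i : ℕ) % 2 = 0 then (1 : ℝ) else 0) + (if (j : ℕ) % 2 = 0 then (1 : ℝ) else 0)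
        ≤ |(i : ℝ) - (j : ℝ)|) := by
  -- achiever sum
  have hsum : ∑ i : Fin k, π * (if (i : ℕ) % 2 = 0 then (1 : ℝ) else 0) ^ 2
      = π * (((k + 1) / 2 : ℕ) : ℝ) := by
    rw [Fin.sum_univ_eq_sum_range (fun n => π * (if n % 2 = 0 then (1 : ℝ) else 0) ^ 2)]
    rw [← Finset.mul_sum, ← count_even k]
    congr 1
    apply Finset.sum_congr rfl
    intro i _
    by_cases h : i % 2 = 0 <;> simp [h]
  -- achiever nonneg
  have hnn : ∀ i : Fin k, 0 ≤ (if (i : ℕ) % 2 = 0 then (1 : ℝ) else 0) := by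
    intro i; by_cases h : (i : ℕ) % 2 = 0 <;> simp [h]
  -- achiever constraint
  have hcon : ∀ i j : Fin k, i ≠ j →
      (if (i : ℕ) % 2 = 0 then (1 : ℝ) else 0) + (if (j : ℕ) % 2 = 0 then (1 : ℝ) else 0)
        ≤ |(i : ℝ) - (j : ℝ)| := by
    intro i j hij
    have hne : (i : ℕ) ≠ (j : ℕ) := fun h => hij (Fin.ext h)
    by_cases hi : (i : ℕ) % 2 = 0 <;> by_cases hj : (j : ℕ) % 2 = 0
    · rw [if_pos hi, if_pos hj]
      exact_mod_cast nat_abs_le (i : ℕ) (j : ℕ) 2 (by omega)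
    · rw [if_pos hi, if_neg hj]
      have := nat_abs_le (i : ℕ) (j : ℕ) 1 (by omega)
      push_cast at this ⊢; linarith
    · rw [if_neg hi, if_pos hj]
      have := nat_abs_le (i : ℕ) (j : ℕ) 1 (by omega)
      push_cast at this ⊢; linarith
    · rw [if_neg hi, if_neg hj]
      simp only [add_zero]; exact abs_nonneg ((i : ℝ) - (j : ℝ))
  have hnnN : ∀ i : ℕ, 0 ≤ (if i % 2 = 0 then (1 : ℝ) else 0) := by
    intro i; by_cases h : i % 2 = 0 <;> simp [h]
  refine ⟨⟨?_, ?_⟩, hsum, hnnN, hcon⟩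
  · exact ⟨(fun i : Fin k => if (i : ℕ) % 2 = 0 then (1 : ℝ) else 0), hnn, hcon, hsum.symm⟩
  -- upper bound
  rintro A ⟨r, hr0, hrc, rfl⟩
  -- each r i ≤ 1
  have hr1 : ∀ i : Fin k, r i ≤ 1 := by
    intro i
    by_cases h : (i : ℕ) + 1 < k
    · have hij : i ≠ ⟨(i : ℕ) + 1, h⟩ := by
        intro he; have := congrArg Fin.val he; simp at this
      have := hrc i ⟨(i : ℕ) + 1, h⟩ hij
      have habs : |(i : ℝ) - ((⟨(i : ℕ) + 1, h⟩ : Fin k) : ℝ)| = 1 := by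
        simp only [Fin.val_mk]  -- maybe
        push_cast
        rw [show ((i:ℕ):ℝ) - (((i:ℕ):ℝ) + 1) = -1 by ring]
        norm_num
      rw [habs] at this
      have := hr0 ⟨(i : ℕ) + 1, h⟩
      linarith
    · have hi1 : 1 ≤ (i : ℕ) := by have := i.isLt; omega
      have hlt : (i : ℕ) - 1 < k := by have := i.isLt; omega
      have hij : i ≠ ⟨(i : ℕ) - 1, hlt⟩ := by
        intro he; have := Fin.val_eq_of_eq he; simp at this; omega
      have hc := hrc i ⟨(i : ℕ) - 1, hlt⟩ hij
      have hcast : (((i : ℕ) - 1 : ℕ) : ℝ) = ((i : ℕ) : ℝ) - 1 := by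
        rw [Nat.cast_sub hi1]; norm_num
      have habs : |(i : ℝ) - ((⟨(i : ℕ) - 1, hlt⟩ : Fin k) : ℝ)| = 1 := by
        show |((i : ℕ) : ℝ) - (((i : ℕ) - 1 : ℕ) : ℝ)| = 1
        rw [hcast]; norm_num
      rw [habs] at hc
      have := hr0 ⟨(i : ℕ) - 1, hlt⟩
      linarith
  -- squares sequence
  set t : ℕ → ℝ := fun n => if h : n < k then (r ⟨n, h⟩) ^ 2 else 0 with ht
  have ht0 : ∀ n, 0 ≤ t n := by
    intro n; simp only [ht]; split
    · positivity
    · exact le_refl 0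
  have htsq : ∀ (n : ℕ) (h : n < k), t n ≤ r ⟨n, h⟩ := by
    intro n h
    simp only [ht, dif_pos h]
    have h0 := hr0 ⟨n, h⟩
    have h1 := hr1 ⟨n, h⟩
    nlinarith
  have hpair : ∀ n, t n + t (n + 1) ≤ 1 := by
    intro n
    by_cases h1 : n + 1 < k
    · have h0 : n < k := by omega
      have hij : (⟨n, h0⟩ : Fin k) ≠ ⟨n + 1, h1⟩ := by
        intro he; have := Fin.val_eq_of_eq he; simp at this
      have hc := hrc ⟨n, h0⟩ ⟨n + 1, h1⟩ hij
      have habs : |((⟨n, h0⟩ : Fin k) : ℝ) - ((⟨n + 1, h1⟩ : Fin k) : ℝ)| = 1 := by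
        show |(n : ℝ) - ((n + 1 : ℕ) : ℝ)| = 1
        push_cast
        rw [show (n : ℝ) - ((n : ℝ) + 1) = -1 by ring]
        norm_num
      rw [habs] at hc
      have t1 := htsq n h0
      have t2 := htsq (n + 1) h1
      linarith
    · by_cases h0 : n < k
      · have := htsq n h0
        have := hr1 ⟨n, h0⟩
        have : t (n + 1) = 0 := by simp only [ht, dif_neg h1]
        rw [this]
        have := htsq n h0
        have := hr1 ⟨n, h0⟩
        linarith
      · have e0 : t n = 0 := by simp only [ht, dif_neg h0]
        have e1 : t (n + 1) = 0 := by simp only [ht, dif_neg h1]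
        rw [e0, e1]; norm_num
  have hbound := sum_pair t ht0 hpair k
  have heq : ∑ i : Fin k, r i ^ 2 = ∑ i ∈ Finset.range k, t i := by
    rw [← Fin.sum_univ_eq_sum_range t]
    apply Finset.sum_congr rfl
    intro i _
    simp only [ht, dif_pos i.isLt]
  calc ∑ i : Fin k, π * r i ^ 2 = π * ∑ i : Fin k, r i ^ 2 := by rw [Finset.mul_sum]
    _ ≤ π * (((k + 1) / 2 : ℕ) : ℝ) := by
        apply mul_le_mul_of_nonneg_left _ (le_of_lt Real.pi_pos)
        rw [heq]; exact hbound
end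

section
/- For four points at the vertices of a unit square, the maximum total area of non-overlapping disks centered at these points equals π(4 − 2√2). -/
open Real Finset

set_option maxHeartbeats 1000000 in
private lemma key' (a b c d s : ℝ) (hs : s^2 = 2) (hs' : 1 ≤ s)
    (hb : 0 ≤ b) (hc : 0 ≤ c) (hd : 0 ≤ d)
    (hba : b ≤ a) (hca : c ≤ a) (hda : d ≤ a)
    (h1 : a + b ≤ 1) (h4 : d + a ≤ 1) (h5 : a + c ≤ s) :
    a^2 + b^2 + c^2 + d^2 ≤ 4 - 2*s := by
  have ha1 : a ≤ 1 := by linarith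
  have hs2 : s ≤ 3/2 := by nlinarith
  have hb2 : b^2 ≤ (1-a)^2 := pow_le_pow_left₀ hb (by linarith) 2
  have hd2 : d^2 ≤ (1-a)^2 := pow_le_pow_left₀ hd (by linarith) 2
  rcases le_or_gt a (1/2) with h | h
  · have hb2' : b^2 ≤ a^2 := pow_le_pow_left₀ hb hba 2
    have hd2' : d^2 ≤ a^2 := pow_le_pow_left₀ hd hda 2
    have hc2' : c^2 ≤ a^2 := pow_le_pow_left₀ hc hca 2
    nlinarith [sq_nonneg a]
  rcases le_or_gt a (s/2) with h2 | h2
  · have hc2 : c^2 ≤ a^2 := pow_le_pow_left₀ hc hca 2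
    nlinarith [mul_nonneg (by linarith : (0:ℝ) ≤ 2*a - 1) (by linarith : (0:ℝ) ≤ s - 2*a)]
  · have hc2 : c^2 ≤ (s-a)^2 := pow_le_pow_left₀ hc (by linarith) 2
    nlinarith [mul_nonneg (by linarith : (0:ℝ) ≤ 2*a - s) (by linarith : (0:ℝ) ≤ 2 - 2*a)]

private lemma key (a b c d s : ℝ) (hs : s^2 = 2) (hs' : 1 ≤ s)
    (ha : 0 ≤ a) (hb : 0 ≤ b) (hc : 0 ≤ c) (hd : 0 ≤ d)
    (h1 : a + b ≤ 1) (h2 : b + c ≤ 1) (h3 : c + d ≤ 1) (h4 : d + a ≤ 1)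
    (h5 : a + c ≤ s) (h6 : b + d ≤ s) :
    a^2 + b^2 + c^2 + d^2 ≤ 4 - 2*s := by
  rcases le_total a b with hab | hab
  · rcases le_total b c with hbc | hbc
    · rcases le_total c d with hcd | hcd
      · have := key' d a b c s hs hs' ha hb hc (by linarith) (by linarith) hcd
          (by linarith) (by linarith) (by linarith)
        linarith
      · have := key' c d a b s hs hs' hd ha hb hcd (by linarith) (by linarith)
          h3 (by linarith) (by linarith)
        linarith
    · rcases le_total b d with hbd | hbd
      · have := key' d a b c s hs hs' ha hb hc (by linarith) hbd (by linarith)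
          (by linarith) (by linarith) (by linarith)
        linarith
      · have := key' b c d a s hs hs' hc hd ha (by linarith) hbd (by linarith)
          h2 (by linarith) (by linarith)
        linarith
  · rcases le_total a c with hac | hac
    · rcases le_total c d with hcd | hcd
      · have := key' d a b c s hs hs' ha hb hc (by linarith) (by linarith) hcd
          (by linarith) (by linarith) (by linarith)
        linarith
      · have := key' c d a b s hs hs' hd ha hb hcd hac (by linarith)
          h3 (by linarith) (by linarith)
        linarith
    · rcases le_total a d with had | had
      · have := key' d a b c s hs hs' ha hb hc had (by linarith) (by linarith)
          (by linarith) (by linarith) (by linarith)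
        linarith
      · have := key' a b c d s hs hs' hb hc hd hab hac had h1 h4 h5
        linarith

/-- The four vertices of the unit square in the Euclidean plane. -/
noncomputable def unitSquare : Fin 4 → EuclideanSpace ℝ (Fin 2) :=
  ![(WithLp.equiv 2 (Fin 2 → ℝ)).symm ![0, 0], (WithLp.equiv 2 (Fin 2 → ℝ)).symm ![1, 0],
    (WithLp.equiv 2 (Fin 2 → ℝ)).symm ![1, 1], (WithLp.equiv 2 (Fin 2 → ℝ)).symm ![0, 1]]

private lemma d01 : dist (unitSquare 0) (unitSquare 1) = 1 := by
  simp [unitSquare, EuclideanSpace.dist_eq, Fin.sum_univ_succ]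
private lemma d12 : dist (unitSquare 1) (unitSquare 2) = 1 := by
  simp [unitSquare, EuclideanSpace.dist_eq, Fin.sum_univ_succ]
private lemma d23 : dist (unitSquare 2) (unitSquare 3) = 1 := by
  simp [unitSquare, EuclideanSpace.dist_eq, Fin.sum_univ_succ]
private lemma d30 : dist (unitSquare 3) (unitSquare 0) = 1 := by
  simp [unitSquare, EuclideanSpace.dist_eq, Fin.sum_univ_succ]
private lemma d02 : dist (unitSquare 0) (unitSquare 2) = Real.sqrt 2 := by
  simp [unitSquare, EuclideanSpace.dist_eq, Fin.sum_univ_succ]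
  norm_num
private lemma d13 : dist (unitSquare 1) (unitSquare 3) = Real.sqrt 2 := by
  simp [unitSquare, EuclideanSpace.dist_eq, Fin.sum_univ_succ]
  norm_num

theorem unitSquare_maxArea :
    IsGreatest
      {A : ℝ | ∃ r : Fin 4 → ℝ,
        (∀ i, 0 ≤ r i) ∧
        (∀ i j : Fin 4, i ≠ j → r i + r j ≤ dist (unitSquare i) (unitSquare j)) ∧
        A = ∑ i, π * r i ^ 2}
      (π * (4 - 2 * Real.sqrt 2)) := by
  have hs : Real.sqrt 2 ^ 2 = 2 := Real.sq_sqrt (by norm_num)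
  have hs' : 1 ≤ Real.sqrt 2 := by
    nlinarith [Real.sqrt_nonneg 2]
  constructor
  · refine ⟨![1, 0, Real.sqrt 2 - 1, 0], ?_, ?_, ?_⟩
    · intro i
      fin_cases i <;> simp <;> linarith
    · have d10 : dist (unitSquare 1) (unitSquare 0) = 1 := by rw [dist_comm]; exact d01
      have d21 : dist (unitSquare 2) (unitSquare 1) = 1 := by rw [dist_comm]; exact d12
      have d32 : dist (unitSquare 3) (unitSquare 2) = 1 := by rw [dist_comm]; exact d23
      have d03 : dist (unitSquare 0) (unitSquare 3) = 1 := by rw [dist_comm]; exact d30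
      have d20 : dist (unitSquare 2) (unitSquare 0) = Real.sqrt 2 := by
        rw [dist_comm]; exact d02
      have d31 : dist (unitSquare 3) (unitSquare 1) = Real.sqrt 2 := by
        rw [dist_comm]; exact d13
      intro i j hij
      fin_cases i <;> fin_cases j <;>
        simp only [Fin.reduceFinMk, d01, d12, d23, d30, d02, d13, d10, d21, d32, d03, d20, d31,
          Matrix.cons_val_zero, Matrix.cons_val_one, Matrix.head_cons,
          Matrix.cons_val_two, Matrix.tail_cons, Matrix.cons_val_three] <;>
        first
          | exact absurd rfl hij
          | nlinarith [hs, hs']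
    · rw [Fin.sum_univ_four]
      have h2 : (Real.sqrt 2 - 1)^2 = 3 - 2*Real.sqrt 2 := by nlinarith [hs]
      simp only [Matrix.cons_val_zero, Matrix.cons_val_one, Matrix.head_cons,
        Matrix.cons_val_two, Matrix.tail_cons, Matrix.cons_val_three]
      rw [h2]; ring
  · rintro A ⟨r, hr0, hrd, rfl⟩
    have h1 := hrd 0 1 (by decide); rw [d01] at h1
    have h2 := hrd 1 2 (by decide); rw [d12] at h2
    have h3 := hrd 2 3 (by decide); rw [d23] at h3
    have h4 := hrd 3 0 (by decide); rw [d30] at h4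
    have h5 := hrd 0 2 (by decide); rw [d02] at h5
    have h6 := hrd 1 3 (by decide); rw [d13] at h6
    have := key (r 0) (r 1) (r 2) (r 3) (Real.sqrt 2) hs hs'
      (hr0 0) (hr0 1) (hr0 2) (hr0 3) h1 h2 h3 h4 h5 h6
    rw [Fin.sum_univ_four]
    nlinarith [Real.pi_pos]
end

section
/- Let p_1 < p_2 < … < p_n be points on a line with gaps d_i = p_{i+1} − p_i. In any feasible radius assignment maximizing ∑ r_i², at least one of the two extreme points p_1, p_n is either a defining point (lies on the boundary of a neighboring disk) or its disk has full radius (r equal to the distance to its nearest neighbor). -/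
open Finset

lemma split_sum_two {n : ℕ} (hn : 2 ≤ n) (f : ℕ → ℝ) :
    ∑ i ∈ range n, f i = f 0 + f 1 + ∑ i ∈ Finset.Ico 2 n, f i := by
  have h : range n = insert 0 (insert 1 (Finset.Ico 2 n)) := by
    ext x
    simp only [Finset.mem_range, Finset.mem_insert, Finset.mem_Ico]
    omega
  rw [h, Finset.sum_insert (by simp), Finset.sum_insert (by simp)]
  ring

/-- For points on a line, in any optimal feasible radius assignment, at least one of
the two extreme points is a defining point (lies on the boundary of some other disk)
or its disk has full radius (equal to the distance to its nearest neighbor). -/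
theorem extreme_point_defining_or_full (n : ℕ) (hn : 2 ≤ n)
    (p : ℕ → ℝ) (hp : ∀ i, i + 1 < n → p i < p (i + 1))
    (r : ℕ → ℝ)
    (hr : ∀ i, i < n → 0 ≤ r i)
    (hfeas : ∀ i, i + 1 < n → r i + r (i + 1) ≤ p (i + 1) - p i)
    (hopt : ∀ r' : ℕ → ℝ, (∀ i, i < n → 0 ≤ r' i) →
      (∀ i, i + 1 < n → r' i + r' (i + 1) ≤ p (i + 1) - p i) →
      ∑ i ∈ range n, r' i ^ 2 ≤ ∑ i ∈ range n, r i ^ 2) :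
    ((∃ j, j < n ∧ j ≠ 0 ∧ r j = |p j - p 0|) ∨ r 0 = p 1 - p 0) ∨
    ((∃ j, j < n ∧ j ≠ n - 1 ∧ r j = |p j - p (n - 1)|) ∨
      r (n - 1) = p (n - 1) - p (n - 2)) := by
  have hp0 : p 0 < p 1 := hp 0 (by omega)
  have hr0 : 0 ≤ r 0 := hr 0 (by omega)
  have hr1 : 0 ≤ r 1 := hr 1 (by omega)
  have hc0 : r 0 + r 1 ≤ p 1 - p 0 := hfeas 0 (by omega)
  -- Step 1: tightness, r 0 + r 1 = p 1 - p 0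
  have heq : r 0 + r 1 = p 1 - p 0 := by
    set r₁ : ℕ → ℝ := fun i => if i = 0 then p 1 - p 0 - r 1 else r i with hr₁def
    have h1 : ∀ i, i < n → 0 ≤ r₁ i := by
      intro i hi
      by_cases h : i = 0
      · simp [hr₁def, h]; linarith
      · simp [hr₁def, h]; exact hr i hi
    have h2 : ∀ i, i + 1 < n → r₁ i + r₁ (i + 1) ≤ p (i + 1) - p i := by
      intro i hi
      by_cases h : i = 0
      · subst h; simp [hr₁def]
      · have : i + 1 ≠ 0 := by omega
        simp [hr₁def, h, this]; exact hfeas i hi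
    have hle := hopt r₁ h1 h2
    rw [split_sum_two hn (fun i => r₁ i ^ 2), split_sum_two hn (fun i => r i ^ 2)] at hle
    have hrest : ∑ i ∈ Finset.Ico 2 n, r₁ i ^ 2 = ∑ i ∈ Finset.Ico 2 n, r i ^ 2 := by
      apply Finset.sum_congr rfl
      intro i hi
      simp only [Finset.mem_Ico] at hi
      have : i ≠ 0 := by omega
      simp [hr₁def, this]
    rw [hrest] at hle
    have h10 : r₁ 0 = p 1 - p 0 - r 1 := by simp [hr₁def]
    have h11 : r₁ 1 = r 1 := by simp [hr₁def]
    rw [h10, h11] at hle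
    have hsq : (p 1 - p 0 - r 1) ^ 2 ≤ r 0 ^ 2 := by linarith
    nlinarith [hsq, hr0, hc0]
  -- Step 2: r 0 * r 1 = 0
  have hprod : r 0 * r 1 ≤ 0 := by
    set r₂ : ℕ → ℝ := fun i => if i = 0 then r 0 + r 1 else if i = 1 then 0 else r i
      with hr₂def
    have h1 : ∀ i, i < n → 0 ≤ r₂ i := by
      intro i hi
      by_cases h : i = 0
      · simp [hr₂def, h]; linarith
      · by_cases h' : i = 1
        · simp [hr₂def, h, h']
        · simp [hr₂def, h, h']; exact hr i hi
    have h2 : ∀ i, i + 1 < n → r₂ i + r₂ (i + 1) ≤ p (i + 1) - p i := by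
      intro i hi
      by_cases h : i = 0
      · subst h; simpa [hr₂def] using hc0
      · by_cases h' : i = 1
        · subst h'
          have hf1 := hfeas 1 hi
          simp [hr₂def]
          calc r 2 ≤ r 1 + r 2 := by linarith
            _ ≤ p 2 - p 1 := hf1
        · have e1 : i + 1 ≠ 0 := by omega
          have e2 : i + 1 ≠ 1 := by omega
          simp [hr₂def, h, h', e1, e2]; exact hfeas i hi
    have hle := hopt r₂ h1 h2
    rw [split_sum_two hn (fun i => r₂ i ^ 2), split_sum_two hn (fun i => r i ^ 2)] at hle
    have hrest : ∑ i ∈ Finset.Ico 2 n, r₂ i ^ 2 = ∑ i ∈ Finset.Ico 2 n, r i ^ 2 := by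
      apply Finset.sum_congr rfl
      intro i hi
      simp only [Finset.mem_Ico] at hi
      have e1 : i ≠ 0 := by omega
      have e2 : i ≠ 1 := by omega
      simp [hr₂def, e1, e2]
    rw [hrest] at hle
    have h20 : r₂ 0 = r 0 + r 1 := by simp [hr₂def]
    have h21 : r₂ 1 = 0 := by simp [hr₂def]
    rw [h20, h21] at hle
    nlinarith [hle]
  have hzero : r 0 = 0 ∨ r 1 = 0 := by
    rcases mul_eq_zero.mp (le_antisymm hprod (mul_nonneg hr0 hr1)) with h | h
    · exact Or.inl h
    · exact Or.inr h
  rcases hzero with h | h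
  · -- r 0 = 0, so r 1 = p 1 - p 0, defining point
    left; left
    refine ⟨1, by omega, one_ne_zero, ?_⟩
    rw [abs_of_nonneg (by linarith : (0:ℝ) ≤ p 1 - p 0)]
    linarith
  · -- r 1 = 0, so r 0 = p 1 - p 0, full radius
    left; right
    linarith
end
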